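/- Consider the approximate n-level problem in which, for i = 2,…,n and t = 1,…,T_i, the iterates are x_i^{(t)} = Φ_i^{(t)}(x_1, x_2^{(T_2)}, …, x_{i−1}^{(T_{i−1})}, x_i^{(t−1)}) with differentiable update maps Φ_i^{(t)} and initial points x_i^{(0)} independent of all other variables, and let F̃_1(x_1) = f_1(x_1, x_2^{(T_2)}(x_1), …, x_n^{(T_n)}(x_1)) with f_1 differentiable. For i = 2,…,n and t = 1,…,T_i, let A_i^{(t)}, B_i^{(t)}, and C_{ij}^{(t)} (j = 2,…,i−1) denote the (suitably transposed) Jacobian matrices of Φ_i^{(t)} with respect to x_i, x_1, and x_j respectively, all evaluated at (x_1, x_2^{(T_2)}, …, x_{i−1}^{(T_{i−1})}, x_i^{(t−1)}). Define recursively, for i = 2,…,n, Z_i = Σ_{t=1}^{T_i} ( Σ_{j=2}^{i−1} Z_j C_{ij}^{(t)} + B_i^{(t)} ) ∏_{s=t+1}^{T_i} A_i^{(s)}. Then for each i = 2,…,n the Jacobian of x_1 ↦ x_i^{(T_i)}(x_1) equals Z_i, and ∇_{x_1} F̃_1(x_1) = ∇_{x_1} f_1 + Σ_{i=2}^{n}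 Z_i ∇_{x_i} f_1, where the partial gradients of f_1 are evaluated at (x_1, x_2^{(T_2)}, …, x_n^{(T_n)}). -/

import Mathlib

/-- The (untransposed) partial Jacobian of a function `f` of a tuple of variables with
respect to the `j`-th slot, at the point `p`, as a continuous linear map.  (In the paper the
Jacobians are transposed so that compositions correspond to right multiplication; here we
work directly with the linear maps.) -/
noncomputable def partialFDeriv {ι : Type*} [DecidableEq ι] {E : ι → Type*}
    [∀ i, NormedAddCommGroup (E i)] [∀ i, NormedSpace ℝ (E i)]
    {G : Type*} [NormedAddCommGroup G] [NormedSpace ℝ G]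
    (f : (∀ i, E i) → G) (p : ∀ i, E i) (j : ι) : E j →L[ℝ] G :=
  fderiv ℝ (fun v => f (Function.update p j v)) (p j)

section Aux

variable {ι : Type*} [DecidableEq ι] [Fintype ι] {E : ι → Type*}
  [∀ i, NormedAddCommGroup (E i)] [∀ i, NormedSpace ℝ (E i)]
  {G : Type*} [NormedAddCommGroup G] [NormedSpace ℝ G]

theorem pi_single_id_apply (i : ι) (y : E i) :
    (ContinuousLinearMap.pi (Pi.single i (ContinuousLinearMap.id ℝ (E i)))) y = Pi.single i y := by
  funext j
  rcases eq_or_ne j i with rfl | hj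
  · simp
  · simp [ContinuousLinearMap.pi_apply, Pi.single_eq_of_ne hj]

theorem partialFDeriv_apply_of_differentiableAt
    {f : (∀ i, E i) → G} {p : ∀ i, E i} (hf : DifferentiableAt ℝ f p) (i : ι) (v : E i) :
    partialFDeriv f p i v = fderiv ℝ f p (Pi.single i v) := by
  have h1 : HasFDerivAt f (fderiv ℝ f p) (Function.update p i (p i)) := by
    rw [Function.update_eq_self]; exact hf.hasFDerivAt
  have h2 : HasFDerivAt (fun v => f (Function.update p i v))
      ((fderiv ℝ f p).comp
        (ContinuousLinearMap.pi (Pi.single i (ContinuousLinearMap.id ℝ (E i)))))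
      (p i) := h1.comp (p i) (hasFDerivAt_update p (p i))
  rw [partialFDeriv, h2.fderiv, ContinuousLinearMap.comp_apply]
  exact congrArg _ (pi_single_id_apply i v)

theorem hasFDerivAt_comp_pi
    {E₀ : Type*} [NormedAddCommGroup E₀] [NormedSpace ℝ E₀]
    {f : (∀ i, E i) → G} {g : E₀ → ∀ i, E i} {x : E₀}
    (hf : DifferentiableAt ℝ f (g x)) (Dg : ∀ i, E₀ →L[ℝ] E i)
    (hg : ∀ i, HasFDerivAt (fun y => g y i) (Dg i) x) :
    HasFDerivAt (fun y => f (g y))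
      (∑ i, (partialFDeriv f (g x) i).comp (Dg i)) x := by
  have hgd : HasFDerivAt g (ContinuousLinearMap.pi Dg) x := by
    rw [hasFDerivAt_pi']
    intro i
    simpa [ContinuousLinearMap.proj_pi] using hg i
  have h := hf.hasFDerivAt.comp x hgd
  convert h using 1
  · rfl
  ext v
  simp only [ContinuousLinearMap.sum_apply, ContinuousLinearMap.comp_apply,
    ContinuousLinearMap.pi_apply]
  calc ∑ i, partialFDeriv f (g x) i (Dg i v)
      = ∑ i, fderiv ℝ f (g x) (Pi.single i (Dg i v)) := by
        refine Finset.sum_congr rfl fun i _ => ?_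
        exact partialFDeriv_apply_of_differentiableAt hf i (Dg i v)
    _ = fderiv ℝ f (g x) (∑ i, Pi.single i (Dg i v)) := (map_sum _ _ _).symm
    _ = fderiv ℝ f (g x) (fun i => Dg i v) := by rw [Finset.univ_sum_single]

theorem mlW_rec {E F : Type*} [NormedAddCommGroup E] [NormedSpace ℝ E]
    [NormedAddCommGroup F] [NormedSpace ℝ F]
    (A : ℕ → F →L[ℝ] F) (Q : ℕ → E →L[ℝ] F) (t : ℕ) :
    (∑ t' ∈ Finset.Icc 1 (t + 1),
      (((List.range' (t' + 1) (t + 1 - t')).reverse.map A).prod).comp (Q t')) =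
    (A (t + 1)).comp (∑ t' ∈ Finset.Icc 1 t,
      (((List.range' (t' + 1) (t - t')).reverse.map A).prod).comp (Q t')) + Q (t + 1) := by
  rw [Finset.sum_Icc_succ_top (by omega : 1 ≤ t + 1)]
  have hterm : ∀ t' ∈ Finset.Icc 1 t,
      (((List.range' (t' + 1) (t + 1 - t')).reverse.map A).prod).comp (Q t') =
      (A (t + 1)).comp ((((List.range' (t' + 1) (t - t')).reverse.map A).prod).comp (Q t')) := by
    intro t' ht'
    rw [Finset.mem_Icc] at ht'
    have h1 : t + 1 - t' = (t - t') + 1 := by omega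
    have h2 : t' + 1 + 1 * (t - t') = t + 1 := by omega
    rw [h1, List.range'_concat, h2, List.reverse_append]
    simp only [List.reverse_cons, List.reverse_nil, List.nil_append, List.singleton_append,
      List.map_cons, List.prod_cons, ContinuousLinearMap.mul_def]
    rw [ContinuousLinearMap.comp_assoc]
  rw [Finset.sum_congr rfl hterm]
  congr 1
  · ext v
    simp only [ContinuousLinearMap.sum_apply, ContinuousLinearMap.comp_apply]
    rw [map_sum]
  · simp [ContinuousLinearMap.one_def]

end Aux

/-- gradient formula for the approximate multilevel problem.  Consider an
`(n+2)`-level problem (levels indexed by `Fin (n+2)`, level `1` being index `0`) with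
differentiable update maps `Φ i t` for the lower levels `i ≠ 0`, iterates
`X i t x₁ = Φ i t (x₁, X 1 (T 1) x₁, …, X (i-1) (T (i-1)) x₁, X i (t-1) x₁)` for
`t = 1, …, T i` whose initial points `X i 0` are independent of all other variables (the
level-`0` "iterate" being `x₁` itself, and `Φ i t` depending only on the variables of levels
`≤ i`), and differentiable upper-level objective `f₁`, with reduced objective
`F̃₁ x₁ = f₁ (x₁, X 1 (T 1) x₁, …)`.  With `A i t x₁`, `B i t x₁`, `C i j t x₁` the partial
Jacobians of `Φ i t` with respect to the slots `i`, `0`, `j` at the corresponding evaluation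
point, and `Z i` defined by the recursion
`Z i = ∑_{t=1}^{T i} (∑_{j≠0, j<i} Z j ⬝ C i j t + B i t) ∏_{s=t+1}^{T i} A i s`
(transposed-matrix form; below in linear-map form), the Jacobian of `x₁ ↦ X i (T i) x₁`
equals `Z i` for every lower level `i`, and
`∇F̃₁ = ∇_{x₁} f₁ + ∑_{i≠0} Z i ∇_{x_i} f₁`, the partial gradients of `f₁` being evaluated
at `(x₁, X 1 (T 1) x₁, …)`. -/
theorem multilevel_gradient_formula
    (n : ℕ) (d : Fin (n + 2) → ℕ) (T : Fin (n + 2) → ℕ)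
    (f₁ : (∀ j, EuclideanSpace ℝ (Fin (d j))) → ℝ)
    (hf₁ : Differentiable ℝ f₁)
    (Φ : ∀ i : Fin (n + 2), ℕ →
      (∀ j, EuclideanSpace ℝ (Fin (d j))) → EuclideanSpace ℝ (Fin (d i)))
    (hΦdiff : ∀ i t, Differentiable ℝ (Φ i t))
    (hΦdep : ∀ (i : Fin (n + 2)) t p q, (∀ j, j ≤ i → p j = q j) → Φ i t p = Φ i t q)
    (X : ∀ i : Fin (n + 2), ℕ → EuclideanSpace ℝ (Fin (d 0)) → EuclideanSpace ℝ (Fin (d i)))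
    (hX0 : ∀ t x₁, X 0 t x₁ = x₁)
    (hXinit : ∀ i : Fin (n + 2), i ≠ 0 → ∀ x₁ y₁, X i 0 x₁ = X i 0 y₁)
    (hXrec : ∀ i : Fin (n + 2), i ≠ 0 → ∀ t, 1 ≤ t → t ≤ T i → ∀ x₁,
      X i t x₁ =
        Φ i t (Function.update (fun j => X j (T j) x₁) i (X i (t - 1) x₁)))
    (Z : ∀ i : Fin (n + 2),
      EuclideanSpace ℝ (Fin (d 0)) →
        (EuclideanSpace ℝ (Fin (d 0)) →L[ℝ] EuclideanSpace ℝ (Fin (d i))))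
    (hZ : ∀ i : Fin (n + 2), i ≠ 0 → ∀ x₁,
      Z i x₁ =
        ∑ t ∈ Finset.Icc 1 (T i),
          (((List.range' (t + 1) (T i - t)).reverse.map (fun s =>
            partialFDeriv (Φ i s)
              (Function.update (fun j => X j (T j) x₁) i (X i (s - 1) x₁)) i)).prod).comp
          ((partialFDeriv (Φ i t)
              (Function.update (fun j => X j (T j) x₁) i (X i (t - 1) x₁)) 0) +
            ∑ j ∈ Finset.univ.filter (fun j => j ≠ 0 ∧ j < i),
              (partialFDeriv (Φ i t)
                (Function.update (fun j' => X j' (T j') x₁) i (X i (t - 1) x₁)) j).comp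
                (Z j x₁))) :
    (∀ i : Fin (n + 2), i ≠ 0 → ∀ x₁,
      HasFDerivAt (fun y => X i (T i) y) (Z i x₁) x₁) ∧
    (∀ x₁,
      fderiv ℝ (fun y => f₁ (fun j => X j (T j) y)) x₁ =
        partialFDeriv f₁ (fun j => X j (T j) x₁) 0 +
          ∑ i ∈ Finset.univ.erase 0,
            (partialFDeriv f₁ (fun j => X j (T j) x₁) i).comp (Z i x₁)) := by
  classical
  have key : ∀ i : Fin (n + 2), i ≠ 0 → ∀ x₁,
      HasFDerivAt (fun y => X i (T i) y) (Z i x₁) x₁ := by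
    have H : ∀ m : ℕ, ∀ i : Fin (n + 2), (i : ℕ) = m → i ≠ 0 → ∀ x₁,
        HasFDerivAt (fun y => X i (T i) y) (Z i x₁) x₁ := by
      intro m
      induction m using Nat.strong_induction_on with
      | _ m IH =>
      intro i him hi
      have IHj : ∀ j : Fin (n + 2), j < i → j ≠ 0 → ∀ y,
          HasFDerivAt (fun z => X j (T j) z) (Z j y) y := by
        intro j hj hj0 y
        exact IH (j : ℕ) (him ▸ hj) j rfl hj0 y
      set BIG : ℕ → EuclideanSpace ℝ (Fin (d 0)) →
          (EuclideanSpace ℝ (Fin (d 0)) →L[ℝ] EuclideanSpace ℝ (Fin (d i))) := fun t y =>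
        ∑ t' ∈ Finset.Icc 1 t,
          (((List.range' (t' + 1) (t - t')).reverse.map (fun s =>
            partialFDeriv (Φ i s)
              (Function.update (fun j => X j (T j) y) i (X i (s - 1) y)) i)).prod).comp
          ((partialFDeriv (Φ i t')
              (Function.update (fun j => X j (T j) y) i (X i (t' - 1) y)) 0) +
            ∑ j ∈ Finset.univ.filter (fun j => j ≠ 0 ∧ j < i),
              (partialFDeriv (Φ i t')
                (Function.update (fun j' => X j' (T j') y) i (X i (t' - 1) y)) j).comp
                (Z j y)) with hBIG
      have claim : ∀ t, t ≤ T i → ∀ y,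
          HasFDerivAt (fun z => X i t z) (BIG t y) y := by
        intro t
        induction t with
        | zero =>
          intro _ y
          have h0 : BIG 0 y = 0 := by
            rw [hBIG]
            simp [Finset.Icc_eq_empty (by omega : ¬(1 : ℕ) ≤ 0)]
          rw [h0, show (fun z => X i 0 z) = fun _ => X i 0 y from
            funext fun z => hXinit i hi z y]
          exact hasFDerivAt_const _ _
        | succ t IHt =>
          intro ht y
          have hprev := IHt (by omega) y
          set g : EuclideanSpace ℝ (Fin (d 0)) → ∀ j, EuclideanSpace ℝ (Fin (d j)) :=
            fun z => Function.update
              (fun j => if j < i then X j (T j) z else X j (T j) y) i (X i t z) with hgdef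
          set Dg : ∀ j : Fin (n + 2),
              EuclideanSpace ℝ (Fin (d 0)) →L[ℝ] EuclideanSpace ℝ (Fin (d j)) :=
            Function.update (Function.update
              (fun j : Fin (n + 2) => if j ≠ 0 ∧ j < i then Z j y else 0) i (BIG t y)) 0
              (ContinuousLinearMap.id ℝ (EuclideanSpace ℝ (Fin (d 0)))) with hDgdef
          have hgy : g y = Function.update (fun j => X j (T j) y) i (X i t y) := by
            funext j
            simp only [hgdef]
            rcases eq_or_ne j i with rfl | hji
            · rw [Function.update_self, Function.update_self]
            · rw [Function.update_of_ne hji, Function.update_of_ne hji]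
              by_cases hjlt : j < i <;> simp [hjlt]
          have hgfun : (fun z => X i (t + 1) z) = fun z => Φ i (t + 1) (g z) := by
            funext z
            rw [hXrec i hi (t + 1) (by omega) ht z]
            refine hΦdep i (t + 1) _ _ (fun j hj => ?_)
            simp only [hgdef, Nat.add_sub_cancel]
            rcases eq_or_ne j i with rfl | hji
            · rw [Function.update_self, Function.update_self]
            · have hjlt : j < i := lt_of_le_of_ne hj hji
              rw [Function.update_of_ne hji, Function.update_of_ne hji, if_pos hjlt]
          have hF0 : Dg 0 = ContinuousLinearMap.id ℝ (EuclideanSpace ℝ (Fin (d 0))) := by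
            simp only [hDgdef, Function.update_self]
          have hFi : Dg i = BIG t y := by
            simp only [hDgdef]
            rw [Function.update_of_ne hi, Function.update_self]
          have hFj : ∀ j, j ≠ 0 → j < i → Dg j = Z j y := by
            intro j hj0 hjlt
            simp only [hDgdef]
            rw [Function.update_of_ne hj0, Function.update_of_ne (ne_of_lt hjlt)]
            exact if_pos ⟨hj0, hjlt⟩
          have hFz : ∀ j, j ≠ 0 → j ≠ i → ¬ j < i → Dg j = 0 := by
            intro j hj0 hji hnlt
            simp only [hDgdef]
            rw [Function.update_of_ne hj0, Function.update_of_ne hji]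
            exact if_neg (fun h => hnlt h.2)
          have hcomp : ∀ j, HasFDerivAt (fun z => g z j) (Dg j) y := by
            intro j
            rcases eq_or_ne j 0 with rfl | hj0
            · have h0i : (0 : Fin (n + 2)) ≠ i := Ne.symm hi
              have h0lt : (0 : Fin (n + 2)) < i := Fin.pos_iff_ne_zero.mpr hi
              rw [hF0]
              simp only [hgdef, Function.update_of_ne h0i, if_pos h0lt, hX0]
              exact hasFDerivAt_id y
            · rcases eq_or_ne j i with rfl | hji
              · rw [hFi]
                simp only [hgdef, Function.update_self]
                exact hprev
              · by_cases hjlt : j < i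
                · rw [hFj j hj0 hjlt]
                  simp only [hgdef, Function.update_of_ne hji, if_pos hjlt]
                  exact IHj j hjlt hj0 y
                · rw [hFz j hj0 hji hjlt]
                  simp only [hgdef, Function.update_of_ne hji, if_neg hjlt]
                  exact hasFDerivAt_const _ _
          have hmain := hasFDerivAt_comp_pi (f := Φ i (t + 1)) (g := g) (x := y)
            ((hΦdiff i (t + 1)) (g y)) Dg hcomp
          rw [hgy] at hmain
          have hss : Finset.univ.filter (fun j => j ≠ 0 ∧ j < i) ⊆
              (Finset.univ.erase (0 : Fin (n + 2))).erase i := by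
            intro j hj
            rw [Finset.mem_filter] at hj
            exact Finset.mem_erase.mpr
              ⟨ne_of_lt hj.2.2, Finset.mem_erase.mpr ⟨hj.2.1, Finset.mem_univ j⟩⟩
          have hrest :
              ∑ j ∈ (Finset.univ.erase (0 : Fin (n + 2))).erase i,
                (partialFDeriv (Φ i (t + 1))
                  (Function.update (fun j => X j (T j) y) i (X i t y)) j).comp (Dg j) =
              ∑ j ∈ Finset.univ.filter (fun j => j ≠ 0 ∧ j < i),
                (partialFDeriv (Φ i (t + 1))
                  (Function.update (fun j' => X j' (T j') y) i (X i t y)) j).comp (Z j y) := by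
            refine (Finset.sum_subset hss (fun j hjm hjn => ?_)).symm.trans
              (Finset.sum_congr rfl fun j hj => ?_)
            · rw [Finset.mem_erase] at hjm
              obtain ⟨hji, hjm'⟩ := hjm
              rw [Finset.mem_erase] at hjm'
              have hnlt : ¬ j < i := by
                rw [Finset.mem_filter] at hjn
                intro h
                exact hjn ⟨Finset.mem_univ j, hjm'.1, h⟩
              rw [hFz j hjm'.1 hji hnlt, ContinuousLinearMap.comp_zero]
            · rw [Finset.mem_filter] at hj
              rw [hFj j hj.2.1 hj.2.2]
          have hsum :
              (∑ j, (partialFDeriv (Φ i (t + 1))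
                (Function.update (fun j => X j (T j) y) i (X i t y)) j).comp (Dg j)) =
              ((partialFDeriv (Φ i (t + 1))
                (Function.update (fun j => X j (T j) y) i (X i t y)) i).comp (BIG t y)) +
              ((partialFDeriv (Φ i (t + 1))
                  (Function.update (fun j => X j (T j) y) i (X i t y)) 0) +
                ∑ j ∈ Finset.univ.filter (fun j => j ≠ 0 ∧ j < i),
                  (partialFDeriv (Φ i (t + 1))
                    (Function.update (fun j' => X j' (T j') y) i (X i t y)) j).comp
                    (Z j y)) := by
            rw [← Finset.add_sum_erase _ _ (Finset.mem_univ (0 : Fin (n + 2)))]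
            rw [← Finset.add_sum_erase _ _
              (Finset.mem_erase.mpr ⟨hi, Finset.mem_univ i⟩)]
            rw [hF0, hFi, ContinuousLinearMap.comp_id, hrest]
            abel
          rw [hsum] at hmain
          rw [hgfun]
          have hrec := mlW_rec
            (fun s => partialFDeriv (Φ i s)
              (Function.update (fun j => X j (T j) y) i (X i (s - 1) y)) i)
            (fun t' => (partialFDeriv (Φ i t')
                (Function.update (fun j => X j (T j) y) i (X i (t' - 1) y)) 0) +
              ∑ j ∈ Finset.univ.filter (fun j => j ≠ 0 ∧ j < i),
                (partialFDeriv (Φ i t')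
                  (Function.update (fun j' => X j' (T j') y) i (X i (t' - 1) y)) j).comp
                  (Z j y)) t
          have heq : BIG (t + 1) y =
              (partialFDeriv (Φ i (t + 1))
                (Function.update (fun j => X j (T j) y) i (X i t y)) i).comp (BIG t y) +
              ((partialFDeriv (Φ i (t + 1))
                  (Function.update (fun j => X j (T j) y) i (X i t y)) 0) +
                ∑ j ∈ Finset.univ.filter (fun j => j ≠ 0 ∧ j < i),
                  (partialFDeriv (Φ i (t + 1))
                    (Function.update (fun j' => X j' (T j') y) i (X i t y)) j).comp
                    (Z j y)) := by
            simp only [hBIG]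
            simp only [Nat.add_sub_cancel] at hrec
            exact hrec
          rw [heq]
          exact hmain
      intro x₁
      have hfinal := claim (T i) le_rfl x₁
      simp only [hBIG] at hfinal
      rw [hZ i hi]
      exact hfinal
    exact fun i hi x₁ => H (i : ℕ) i rfl hi x₁
  refine ⟨key, fun x₁ => ?_⟩
  have hcomp : ∀ j : Fin (n + 2), HasFDerivAt (fun y => X j (T j) y)
      ((Function.update (fun j' : Fin (n + 2) => Z j' x₁) 0
        (ContinuousLinearMap.id ℝ (EuclideanSpace ℝ (Fin (d 0))))) j) x₁ := by
    intro j
    rcases eq_or_ne j 0 with rfl | hj0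
    · simp only [Function.update_self, hX0]
      exact hasFDerivAt_id x₁
    · rw [Function.update_of_ne hj0]
      exact key j hj0 x₁
  have h := hasFDerivAt_comp_pi (f := f₁) (g := fun y j => X j (T j) y) (x := x₁)
    (hf₁ _) _ hcomp
  rw [h.fderiv]
  rw [← Finset.add_sum_erase _ _ (Finset.mem_univ (0 : Fin (n + 2)))]
  congr 1
  refine Finset.sum_congr rfl fun j hj => ?_
  rw [Function.update_of_ne (Finset.mem_erase.mp hj).1]
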